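/- For a fixed CFG and input of length n, the number of applications of the backward-initialization step of the variant satisfies 𝒱_4 ≤ (n+1) · (ℰ_1 + |{α | S → α ∈ P}|). -/

import Mathlib

/-! Formalization of Earley parsing and the Nederhof–Satta variant. -/

variable {T N : Type}

/-- A context-free grammar: a start nonterminal and a set of productions. -/
structure CFG (T N : Type) where
  initial : N
  rules : Set (N × List (Symbol T N))

/-- One rewriting step of the grammar. -/
def CFG.Produces (g : CFG T N) (u v : List (Symbol T N)) : Prop :=
  ∃ A α p q, (A, α) ∈ g.rules ∧ u = p ++ [Symbol.nonterminal A] ++ q ∧ v = p ++ α ++ q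

/-- The derivation relation ⇒* (reflexive-transitive closure of rewriting). -/
def CFG.Derives (g : CFG T N) : List (Symbol T N) → List (Symbol T N) → Prop :=
  Relation.ReflTransGen g.Produces

/-- The language of the grammar: { w | S ⇒* w }. -/
def CFG.language (g : CFG T N) : Set (List T) :=
  { w | g.Derives [Symbol.nonterminal g.initial] (w.map Symbol.terminal) }

/-- `inputSlice w i j` is the substring a_{i+1}⋯a_j of `w` (0-based: w[i..j)), as symbols. -/
def inputSlice (w : List T) (i j : ℕ) : List (Symbol T N) :=
  ((w.take j).drop i).map Symbol.terminal

/-- The least Earley table: `Earley g w A α β i j` means the dotted item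
[A → α • β] is inserted in E_{i,j}. -/
inductive Earley (g : CFG T N) (w : List T) :
    N → List (Symbol T N) → List (Symbol T N) → ℕ → ℕ → Prop where
  | init {α} : (g.initial, α) ∈ g.rules → Earley g w g.initial [] α 0 0
  | predict {B α A β i j γ} : Earley g w B α (Symbol.nonterminal A :: β) i j →
      (A, γ) ∈ g.rules → Earley g w A [] γ j j
  | scan {A α a β i j} : Earley g w A α (Symbol.terminal a :: β) i j →
      w[j]? = some a → Earley g w A (α ++ [Symbol.terminal a]) β i (j + 1)
  | complete {A α B β i k γ j} : Earley g w A α (Symbol.nonterminal B :: β) i k →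
      Earley g w B γ [] k j → (B, γ) ∈ g.rules →
      Earley g w A (α ++ [Symbol.nonterminal B]) β i j

mutual
  /-- Forward part of the variant: `VarU g w β j` means suffix item [β] ∈ U_j. -/
  inductive VarU (g : CFG T N) (w : List T) : List (Symbol T N) → ℕ → Prop where
    | init {α} : (g.initial, α) ∈ g.rules → VarU g w α 0
    | predict {A β j γ} : VarU g w (Symbol.nonterminal A :: β) j →
        (A, γ) ∈ g.rules → VarU g w γ j
    | scan {a β j} : VarU g w (Symbol.terminal a :: β) j → w[j]? = some a →
        VarU g w β (j + 1)
    | complete {B β k γ j} : VarU g w (Symbol.nonterminal B :: β) k → (B, γ) ∈ g.rules →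
        VarT g w γ k j → VarU g w β j

  /-- Backward part of the variant: `VarT g w β j m` means suffix item [β] ∈ T_{j,m}. -/
  inductive VarT (g : CFG T N) (w : List T) : List (Symbol T N) → ℕ → ℕ → Prop where
    | empty {m} : VarU g w [] m → VarT g w [] m m
    | scan {a β j m} : VarU g w (Symbol.terminal a :: β) j → w[j]? = some a →
        VarT g w β (j + 1) m → VarT g w (Symbol.terminal a :: β) j m
    | complete {B β k γ j m} : VarU g w (Symbol.nonterminal B :: β) k → (B, γ) ∈ g.rules →
        VarT g w γ k j → VarT g w β j m → VarT g w (Symbol.nonterminal B :: β) k m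
end

/-- Number of initialization steps: distinct right-hand sides of start productions. -/
noncomputable def countInit (g : CFG T N) : ℕ :=
  Set.ncard {α | (g.initial, α) ∈ g.rules}

/-- ℰ₁: applicable instantiations of Earley's prediction rule. -/
noncomputable def countE1 (g : CFG T N) (w : List T) : ℕ :=
  Set.ncard {x : N × List (Symbol T N) × N × List (Symbol T N) × ℕ × ℕ × List (Symbol T N) |
    match x with
      | (B, α, A, β, i, j, γ) =>
          Earley g w B α (Symbol.nonterminal A :: β) i j ∧ (A, γ) ∈ g.rules}

/-- ℰ₂: applicable instantiations of Earley's scanning rule. -/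
noncomputable def countE2 (g : CFG T N) (w : List T) : ℕ :=
  Set.ncard {x : N × List (Symbol T N) × T × List (Symbol T N) × ℕ × ℕ |
    match x with
      | (A, α, a, β, i, j) =>
          Earley g w A α (Symbol.terminal a :: β) i j ∧ w[j]? = some a}

/-- ℰ₃: applicable instantiations of Earley's completion rule. -/
noncomputable def countE3 (g : CFG T N) (w : List T) : ℕ :=
  Set.ncard {x : N × List (Symbol T N) × N × List (Symbol T N) × ℕ × ℕ × List (Symbol T N) × ℕ |
    match x with
      | (A, α, B, β, i, k, γ, j) =>
          Earley g w A α (Symbol.nonterminal B :: β) i k ∧ (B, γ) ∈ g.rules ∧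
        Earley g w B γ [] k j}

/-- 𝒱₁: applicable instantiations of the variant's forward prediction rule. -/
noncomputable def countV1 (g : CFG T N) (w : List T) : ℕ :=
  Set.ncard {x : N × List (Symbol T N) × ℕ × List (Symbol T N) |
    match x with
      | (A, β, j, γ) =>
          VarU g w (Symbol.nonterminal A :: β) j ∧ (A, γ) ∈ g.rules}

/-- 𝒱₂: applicable instantiations of the variant's forward scanning rule. -/
noncomputable def countV2 (g : CFG T N) (w : List T) : ℕ :=
  Set.ncard {x : T × List (Symbol T N) × ℕ |
    match x with
      | (a, β, j) =>
          VarU g w (Symbol.terminal a :: β) j ∧ w[j]? = some a}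

/-- 𝒱₃: applicable instantiations of the variant's forward completion rule. -/
noncomputable def countV3 (g : CFG T N) (w : List T) : ℕ :=
  Set.ncard {x : N × List (Symbol T N) × ℕ × List (Symbol T N) × ℕ |
    match x with
      | (B, β, k, γ, j) =>
          VarU g w (Symbol.nonterminal B :: β) k ∧ (B, γ) ∈ g.rules ∧ VarT g w γ k j}

/-- 𝒱₄: applicable instantiations of the variant's backward-initialization rule. -/
noncomputable def countV4 (g : CFG T N) (w : List T) : ℕ :=
  Set.ncard {m : ℕ | VarU g w [] m}

/-- 𝒱₅: applicable instantiations of the variant's backward scanning rule. -/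
noncomputable def countV5 (g : CFG T N) (w : List T) : ℕ :=
  Set.ncard {x : T × List (Symbol T N) × ℕ × ℕ |
    match x with
      | (a, β, j, m) =>
          VarU g w (Symbol.terminal a :: β) j ∧ w[j]? = some a ∧ VarT g w β (j + 1) m}

/-- 𝒱₆: applicable instantiations of the variant's backward completion rule. -/
noncomputable def countV6 (g : CFG T N) (w : List T) : ℕ :=
  Set.ncard {x : N × List (Symbol T N) × ℕ × List (Symbol T N) × ℕ × ℕ |
    match x with
      | (B, β, k, γ, j, m) =>
          VarU g w (Symbol.nonterminal B :: β) k ∧ (B, γ) ∈ g.rules ∧ VarT g w γ k j ∧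
        VarT g w β j m}

theorem VarU_le {g : CFG T N} {w : List T} {β j} (h : VarU g w β j) :
    j ≤ w.length := by
  refine VarU.rec (g := g) (w := w)
    (motive_1 := fun β j _ => j ≤ w.length)
    (motive_2 := fun β j m _ => m ≤ w.length)
    ?_ ?_ ?_ ?_ ?_ ?_ ?_ h
  · intro _ _; exact Nat.zero_le _
  · intro _ _ _ _ _ _ ih; exact ih
  · intro _ _ _ _ ha ih; exact Nat.succ_le_of_lt (List.getElem?_eq_some_iff.mp ha).1
  · intro _ _ _ _ _ _ _ _ _ ih2; exact ih2
  · intro _ _ ih; exact ih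
  · intro _ _ _ _ _ _ _ _ ih2; exact ih2
  · intro _ _ _ _ _ _ _ _ _ _ _ _ ih3; exact ih3

theorem VarU_start {g : CFG T N} {w : List T} {β j} (h : VarU g w β j) :
    ∃ α, (g.initial, α) ∈ g.rules := by
  refine VarU.rec (g := g) (w := w)
    (motive_1 := fun _ _ _ => ∃ α, (g.initial, α) ∈ g.rules)
    (motive_2 := fun _ _ _ _ => ∃ α, (g.initial, α) ∈ g.rules)
    ?_ ?_ ?_ ?_ ?_ ?_ ?_ h
  · intro α hα; exact ⟨α, hα⟩
  · intro _ _ _ _ _ _ ih; exact ih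
  · intro _ _ _ _ _ ih; exact ih
  · intro _ _ _ _ _ _ _ _ ih _; exact ih
  · intro _ _ ih; exact ih
  · intro _ _ _ _ _ _ _ ih _; exact ih
  · intro _ _ _ _ _ _ _ _ _ _ ih _ _; exact ih

/-- 𝒱₄ ≤ (n+1) · (ℰ₁ + |{α | S → α ∈ P}|). -/
theorem variant_step4_le (g : CFG T N) (w : List T) (hfin : g.rules.Finite) :
    countV4 g w ≤ (w.length + 1) * (countE1 g w + countInit g) := by
  rcases Set.eq_empty_or_nonempty {m : ℕ | VarU g w [] m} with he | ⟨m, hm⟩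
  · simp [countV4, he]
  · have hsub : {m : ℕ | VarU g w [] m} ⊆ ↑(Finset.range (w.length + 1)) := by
      intro x hx
      simpa [Nat.lt_succ_iff] using VarU_le hx
    have h1 : countV4 g w ≤ w.length + 1 := by
      calc countV4 g w ≤ (↑(Finset.range (w.length + 1)) : Set ℕ).ncard :=
            Set.ncard_le_ncard hsub (Finset.range (w.length + 1)).finite_toSet
        _ = w.length + 1 := by rw [Set.ncard_coe_finset, Finset.card_range]
    have hinit : 1 ≤ countInit g := by
      have hfin' : {α | (g.initial, α) ∈ g.rules}.Finite := by
        have : {α | (g.initial, α) ∈ g.rules} =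
            (fun α => (g.initial, α)) ⁻¹' g.rules := rfl
        rw [this]
        exact hfin.preimage (fun a _ b _ h => (Prod.ext_iff.mp h).2)
      obtain ⟨α, hα⟩ := VarU_start hm
      have : 0 < countInit g := Set.ncard_pos hfin' |>.mpr ⟨α, hα⟩
      omega
    calc countV4 g w ≤ w.length + 1 := h1
      _ = (w.length + 1) * 1 := (Nat.mul_one _).symm
      _ ≤ (w.length + 1) * (countE1 g w + countInit g) :=
          Nat.mul_le_mul_left _ (by omega)
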